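/- In the ring of Laurent polynomials ℤ[T, T⁻¹], define χ(n) := Σ_{i=0}^{n} T^{n−2i} for n ∈ ℕ. Then for all r, s ∈ ℕ with r ≥ s, one has χ(r)·χ(s) = Σ_{m=0}^{s} χ(r + s − 2m). -/

import Mathlib

noncomputable section

open LaurentPolynomial Finset in
private lemma chi_aux_key (n : ℕ) :
    (T 1 - T (-1) : LaurentPolynomial ℤ) *
      (∑ i ∈ Finset.range (n + 1), LaurentPolynomial.T ((n : ℤ) - 2 * i)) =
    T ((n : ℤ) + 1) - T (-((n : ℤ) + 1)) := by
  rw [Finset.mul_sum]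
  have step : ∀ i ∈ Finset.range (n + 1),
      (T 1 - T (-1) : LaurentPolynomial ℤ) * T ((n : ℤ) - 2 * i) =
      (fun t : ℕ => (T ((n : ℤ) + 1 - 2 * t) : LaurentPolynomial ℤ)) i -
      (fun t : ℕ => (T ((n : ℤ) + 1 - 2 * t) : LaurentPolynomial ℤ)) (i + 1) := by
    intro i _
    have e1 : (n : ℤ) + 1 - 2 * (i : ℕ) = ((n : ℤ) - 2 * i) + 1 := by push_cast; ring
    have e2 : (n : ℤ) + 1 - 2 * ((i + 1 : ℕ) : ℤ) = ((n : ℤ) - 2 * i) + (-1) := by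
      push_cast; ring
    simp only [e1, e2, T_add]
    ring
  rw [Finset.sum_congr rfl step,
    Finset.sum_range_sub' (fun t : ℕ => (T ((n : ℤ) + 1 - 2 * t) : LaurentPolynomial ℤ))]
  congr 2 <;> push_cast <;> ring

/-- The Weyl character `χ(n) = Tⁿ + Tⁿ⁻² + ⋯ + T⁻ⁿ = ∑_{i=0}^{n} T^{n-2i}` of the `SL₂`
module `∇(n)`, as a Laurent polynomial in `ℤ[T, T⁻¹]`. -/
def chi (n : ℕ) : LaurentPolynomial ℤ :=
  ∑ i ∈ Finset.range (n + 1), LaurentPolynomial.T ((n : ℤ) - 2 * i)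

open LaurentPolynomial Finset in
private lemma chi_key (n : ℕ) :
    (T 1 - T (-1) : LaurentPolynomial ℤ) * chi n = T ((n : ℤ) + 1) - T (-((n : ℤ) + 1)) :=
  chi_aux_key n

/-- For `r ≥ s`, `χ(r) · χ(s) = ∑_{m=0}^{s} χ(r + s − 2m)`: the character of
`∇(r) ⊗ ∇(s)`. -/
theorem chi_mul_chi (r s : ℕ) (h : s ≤ r) :
    chi r * chi s = ∑ m ∈ Finset.range (s + 1), chi (r + s - 2 * m) := by
  open LaurentPolynomial Finset in
  have hne : (T 1 - T (-1) : LaurentPolynomial ℤ) ≠ 0 := by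
    intro h0
    rw [sub_eq_zero, LaurentPolynomial.T, LaurentPolynomial.T] at h0
    have : (1 : ℤ) = -1 := AddMonoidAlgebra.single_left_injective one_ne_zero h0
    norm_num at this
  open LaurentPolynomial Finset in
  apply mul_left_cancel₀ hne
  open LaurentPolynomial Finset in
  set f : ℕ → LaurentPolynomial ℤ := fun t => T ((r : ℤ) + s + 1 - 2 * t) with hf
  open LaurentPolynomial Finset in
  have lhs : (T 1 - T (-1) : LaurentPolynomial ℤ) * (chi r * chi s) =
      ∑ i ∈ Finset.range (r + 1), (f i - f (s + 1 + i)) := by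
    rw [mul_left_comm, chi_key s, chi, Finset.sum_mul]
    refine Finset.sum_congr rfl fun i _ => ?_
    have e1 : ((r : ℤ) - 2 * i) + ((s : ℤ) + 1) = (r : ℤ) + s + 1 - 2 * (i : ℕ) := by ring
    have e2 : ((r : ℤ) - 2 * i) + (-((s : ℤ) + 1)) =
        (r : ℤ) + s + 1 - 2 * ((s + 1 + i : ℕ) : ℤ) := by push_cast; ring
    rw [mul_sub, ← T_add, ← T_add, e1, e2]
  open LaurentPolynomial Finset in
  have rhs : (T 1 - T (-1) : LaurentPolynomial ℤ) *
      (∑ m ∈ Finset.range (s + 1), chi (r + s - 2 * m)) =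
      ∑ m ∈ Finset.range (s + 1), (f m - f (r + s + 1 - m)) := by
    rw [Finset.mul_sum]
    refine Finset.sum_congr rfl fun m hm => ?_
    rw [Finset.mem_range] at hm
    rw [chi_key (r + s - 2 * m)]
    have hc : ((r + s - 2 * m : ℕ) : ℤ) = (r : ℤ) + s - 2 * m := by omega
    rw [hc]
    have e1 : (r : ℤ) + s - 2 * m + 1 = (r : ℤ) + s + 1 - 2 * (m : ℕ) := by ring
    have e2 : -((r : ℤ) + s - 2 * m + 1) = (r : ℤ) + s + 1 - 2 * ((r + s + 1 - m : ℕ) : ℤ) := by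
      have hc2 : ((r + s + 1 - m : ℕ) : ℤ) = (r : ℤ) + s + 1 - m := by omega
      rw [hc2]; ring
    rw [e2, e1]
  open LaurentPolynomial Finset in
  rw [lhs, rhs]
  open LaurentPolynomial Finset in
  have refl : ∑ m ∈ Finset.range (s + 1), f (r + s + 1 - m) =
      ∑ m ∈ Finset.range (s + 1), f (r + 1 + m) := by
    rw [← Finset.sum_range_reflect (fun j => f (r + 1 + j)) (s + 1)]
    refine Finset.sum_congr rfl fun j hj => ?_
    rw [Finset.mem_range] at hj
    congr 1
    omega
  open LaurentPolynomial Finset in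
  rw [Finset.sum_sub_distrib, Finset.sum_sub_distrib, refl, sub_eq_sub_iff_add_eq_add,
    ← Finset.sum_range_add f (r + 1) (s + 1), ← Finset.sum_range_add f (s + 1) (r + 1),
    Nat.add_comm (r + 1) (s + 1)]

end
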